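/- Suppose 𝒜 : ℝ^{m×n} → ℝ^p satisfies the RIP with constant δ_r(𝒜), and Ψ is an orthonormal set of matrices such that rank(P_Ψ X) ≤ r for all X. Then for all X ∈ ℝ^{m×n}: (1−δ_r(𝒜))‖P_Ψ X‖_F ≤ ‖P_Ψ 𝒜* 𝒜 P_Ψ X‖_F ≤ (1+δ_r(𝒜))‖P_Ψ X‖_F. -/

import Mathlib

open scoped BigOperators
open Matrix

noncomputable section

/-- Frobenius (trace) inner product of real matrices. -/
def frobInner {m n : ℕ} (X Y : Matrix (Fin m) (Fin n) ℝ) : ℝ :=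
  ∑ i, ∑ j, X i j * Y i j

/-- Frobenius norm of a real matrix. -/
def frobNorm {m n : ℕ} (X : Matrix (Fin m) (Fin n) ℝ) : ℝ :=
  Real.sqrt (frobInner X X)

/-- Euclidean norm of a vector in ℝ^p. -/
def vecNorm {p : ℕ} (b : Fin p → ℝ) : ℝ :=
  Real.sqrt (∑ i, b i ^ 2)

/-- A finite set of matrices is orthonormal w.r.t. the trace inner product. -/
def IsOrthonormalSet {m n : ℕ} (Ψ : Finset (Matrix (Fin m) (Fin n) ℝ)) : Prop :=
  (∀ ψ ∈ Ψ, frobInner ψ ψ = 1) ∧ ∀ ψ ∈ Ψ, ∀ φ ∈ Ψ, ψ ≠ φ → frobInner ψ φ = 0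

/-- Orthogonal projection onto the span of an orthonormal family Ψ. -/
def projSpan {m n : ℕ} (Ψ : Finset (Matrix (Fin m) (Fin n) ℝ))
    (X : Matrix (Fin m) (Fin n) ℝ) : Matrix (Fin m) (Fin n) ℝ :=
  ∑ ψ ∈ Ψ, frobInner ψ X • ψ

namespace ProofAux

variable {m n : ℕ}

lemma frobInner_comm (X Y : Matrix (Fin m) (Fin n) ℝ) : frobInner X Y = frobInner Y X := by
  simp [frobInner, mul_comm]

lemma frobInner_nonneg (X : Matrix (Fin m) (Fin n) ℝ) : 0 ≤ frobInner X X := by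
  apply Finset.sum_nonneg; intro i _; apply Finset.sum_nonneg; intro j _
  exact mul_self_nonneg _

lemma frobNorm_nonneg (X : Matrix (Fin m) (Fin n) ℝ) : 0 ≤ frobNorm X := Real.sqrt_nonneg _

lemma frobNorm_sq (X : Matrix (Fin m) (Fin n) ℝ) : frobNorm X ^ 2 = frobInner X X :=
  Real.sq_sqrt (frobInner_nonneg X)

lemma frobInner_add_left (X Y W : Matrix (Fin m) (Fin n) ℝ) :
    frobInner (X + Y) W = frobInner X W + frobInner Y W := by
  simp [frobInner, Matrix.add_apply, add_mul, Finset.sum_add_distrib]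

lemma frobInner_zero_left (W : Matrix (Fin m) (Fin n) ℝ) :
    frobInner (0 : Matrix (Fin m) (Fin n) ℝ) W = 0 := by
  simp [frobInner]

lemma frobInner_sum_left {ι : Type*} (s : Finset ι) (f : ι → Matrix (Fin m) (Fin n) ℝ)
    (W : Matrix (Fin m) (Fin n) ℝ) :
    frobInner (∑ ψ ∈ s, f ψ) W = ∑ ψ ∈ s, frobInner (f ψ) W := by
  classical
  induction s using Finset.induction_on with
  | empty => simp [frobInner_zero_left]
  | insert _ _ h ih =>
      rw [Finset.sum_insert h, Finset.sum_insert h, frobInner_add_left, ih]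

lemma frobInner_smul_left (a : ℝ) (X Y : Matrix (Fin m) (Fin n) ℝ) :
    frobInner (a • X) Y = a * frobInner X Y := by
  simp [frobInner, Finset.mul_sum, mul_assoc]

lemma frobInner_proj_left (Ψ : Finset (Matrix (Fin m) (Fin n) ℝ))
    (Z W : Matrix (Fin m) (Fin n) ℝ) :
    frobInner (projSpan Ψ Z) W = ∑ ψ ∈ Ψ, frobInner ψ Z * frobInner ψ W := by
  rw [projSpan, frobInner_sum_left]
  simp [frobInner_smul_left]

lemma proj_selfAdjoint (Ψ : Finset (Matrix (Fin m) (Fin n) ℝ))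
    (Z W : Matrix (Fin m) (Fin n) ℝ) :
    frobInner (projSpan Ψ Z) W = frobInner Z (projSpan Ψ W) := by
  rw [frobInner_proj_left, frobInner_comm Z, frobInner_proj_left]
  simp [mul_comm]

lemma proj_idem (Ψ : Finset (Matrix (Fin m) (Fin n) ℝ)) (hΨ : IsOrthonormalSet Ψ)
    (Z : Matrix (Fin m) (Fin n) ℝ) :
    projSpan Ψ (projSpan Ψ Z) = projSpan Ψ Z := by
  have key : ∀ ψ ∈ Ψ, frobInner ψ (projSpan Ψ Z) = frobInner ψ Z := by
    intro ψ hψ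
    rw [frobInner_comm, frobInner_proj_left]
    rw [Finset.sum_eq_single ψ]
    · rw [frobInner_comm ψ Z, hΨ.1 ψ hψ, mul_one]
    · intro φ hφ hne
      rw [frobInner_comm φ ψ, hΨ.2 ψ hψ φ hφ (Ne.symm hne), mul_zero]
    · intro h; exact absurd hψ h
  unfold projSpan
  refine Finset.sum_congr rfl fun ψ hψ => ?_
  rw [show (∑ φ ∈ Ψ, frobInner φ Z • φ) = projSpan Ψ Z from rfl, key ψ hψ]

lemma frobInner_cauchy (X Y : Matrix (Fin m) (Fin n) ℝ) :
    frobInner X Y ≤ frobNorm X * frobNorm Y := by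
  have h : ∀ Z W : Matrix (Fin m) (Fin n) ℝ,
      frobInner Z W = ∑ q : Fin m × Fin n, Z q.1 q.2 * W q.1 q.2 := by
    intro Z W
    rw [frobInner, ← Finset.sum_product']
    rfl
  rw [frobNorm, frobNorm, h, h X X, h Y Y]
  have h1 : ∀ Z : Matrix (Fin m) (Fin n) ℝ,
      (∑ q : Fin m × Fin n, Z q.1 q.2 * Z q.1 q.2) = ∑ q : Fin m × Fin n, Z q.1 q.2 ^ 2 := by
    intro Z; apply Finset.sum_congr rfl; intro q _; ring
  rw [h1, h1]
  exact Real.sum_mul_le_sqrt_mul_sqrt _ _ _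

end ProofAux

open ProofAux

/-- Proposition 2.1, inequality (2.4): the eigenvalue bounds for P_Ψ 𝒜* 𝒜 P_Ψ. -/
theorem proj_normal_bound {m n p r : ℕ}
    (A : Matrix (Fin m) (Fin n) ℝ →ₗ[ℝ] (Fin p → ℝ))
    (Aadj : (Fin p → ℝ) →ₗ[ℝ] Matrix (Fin m) (Fin n) ℝ)
    (hadj : ∀ (X : Matrix (Fin m) (Fin n) ℝ) (c : Fin p → ℝ),
      ∑ i, A X i * c i = frobInner (Aadj c) X)
    (δ : ℝ) (hδ : 0 ≤ δ)
    (hRIP : ∀ X : Matrix (Fin m) (Fin n) ℝ, X.rank ≤ r →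
      (1 - δ) * frobNorm X ^ 2 ≤ vecNorm (A X) ^ 2 ∧
        vecNorm (A X) ^ 2 ≤ (1 + δ) * frobNorm X ^ 2)
    (Ψ : Finset (Matrix (Fin m) (Fin n) ℝ)) (hΨ : IsOrthonormalSet Ψ)
    (hrank : ∀ X : Matrix (Fin m) (Fin n) ℝ, (projSpan Ψ X).rank ≤ r) :
    ∀ X : Matrix (Fin m) (Fin n) ℝ,
      (1 - δ) * frobNorm (projSpan Ψ X) ≤
          frobNorm (projSpan Ψ (Aadj (A (projSpan Ψ X)))) ∧
        frobNorm (projSpan Ψ (Aadj (A (projSpan Ψ X)))) ≤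
          (1 + δ) * frobNorm (projSpan Ψ X) := by
  intro X
  set Y := projSpan Ψ X with hY
  set W := projSpan Ψ (Aadj (A Y)) with hW
  have hPY : projSpan Ψ Y = Y := proj_idem Ψ hΨ X
  have hPW : projSpan Ψ W = W := proj_idem Ψ hΨ (Aadj (A Y))
  have hYr : Y.rank ≤ r := hrank X
  have hWr : W.rank ≤ r := hrank (Aadj (A Y))
  have hYn : 0 ≤ frobNorm Y := frobNorm_nonneg Y
  have hWn : 0 ≤ frobNorm W := frobNorm_nonneg W
  have keyWZ : ∀ Z : Matrix (Fin m) (Fin n) ℝ, projSpan Ψ Z = Z →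
      frobInner W Z = ∑ i, A Z i * A Y i := by
    intro Z hZ
    rw [hW, proj_selfAdjoint, hZ, ← hadj]
  have key1 : frobInner W Y = ∑ i, A Y i * A Y i := keyWZ Y hPY
  have key2 : frobInner W W = ∑ i, A W i * A Y i := keyWZ W hPW
  have hvec : ∀ b : Fin p → ℝ, vecNorm b ^ 2 = ∑ i, b i ^ 2 := by
    intro b
    rw [vecNorm]
    exact Real.sq_sqrt (Finset.sum_nonneg fun i _ => sq_nonneg _)
  have hAY : ∑ i, A Y i * A Y i = vecNorm (A Y) ^ 2 := by
    rw [hvec]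
    apply Finset.sum_congr rfl; intro i _; ring
  have hRIPY := hRIP Y hYr
  have hRIPW := hRIP W hWr
  constructor
  · -- lower bound
    have h1 : (1 - δ) * frobNorm Y ^ 2 ≤ frobInner W Y := by
      rw [key1, hAY]; exact hRIPY.1
    have h2 : frobInner W Y ≤ frobNorm W * frobNorm Y := frobInner_cauchy W Y
    rcases eq_or_lt_of_le hYn with h0 | h0
    · rw [← h0]; simpa using hWn
    · nlinarith
  · -- upper bound
    have h1 : frobNorm W ^ 2 ≤ vecNorm (A W) * vecNorm (A Y) := by
      rw [frobNorm_sq, key2]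
      have := Real.sum_mul_le_sqrt_mul_sqrt Finset.univ (A W) (A Y)
      simpa [vecNorm] using this
    have hAWn : 0 ≤ vecNorm (A W) := Real.sqrt_nonneg _
    have hAYn : 0 ≤ vecNorm (A Y) := Real.sqrt_nonneg _
    have hδ1 : (0:ℝ) ≤ 1 + δ := by linarith
    have sqle : ∀ a b : ℝ, 0 ≤ a → 0 ≤ b → a ^ 2 ≤ b ^ 2 → a ≤ b := by
      intro a b ha hb hab
      calc a = Real.sqrt (a ^ 2) := (Real.sqrt_sq ha).symm
        _ ≤ Real.sqrt (b ^ 2) := Real.sqrt_le_sqrt hab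
        _ = b := Real.sqrt_sq hb
    have hAWb : vecNorm (A W) ≤ Real.sqrt (1 + δ) * frobNorm W := by
      apply sqle _ _ hAWn (by positivity)
      rw [mul_pow, Real.sq_sqrt hδ1]
      exact hRIPW.2
    have hAYb : vecNorm (A Y) ≤ Real.sqrt (1 + δ) * frobNorm Y := by
      apply sqle _ _ hAYn (by positivity)
      rw [mul_pow, Real.sq_sqrt hδ1]
      exact hRIPY.2
    have h2 : frobNorm W ^ 2 ≤ (1 + δ) * (frobNorm W * frobNorm Y) := by
      have hm : vecNorm (A W) * vecNorm (A Y) ≤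
          (Real.sqrt (1 + δ) * frobNorm W) * (Real.sqrt (1 + δ) * frobNorm Y) :=
        mul_le_mul hAWb hAYb hAYn (by positivity)
      have hs : Real.sqrt (1 + δ) * Real.sqrt (1 + δ) = 1 + δ := Real.mul_self_sqrt hδ1
      calc frobNorm W ^ 2 ≤ vecNorm (A W) * vecNorm (A Y) := h1
        _ ≤ _ := hm
        _ = (Real.sqrt (1 + δ) * Real.sqrt (1 + δ)) * (frobNorm W * frobNorm Y) := by ring
        _ = (1 + δ) * (frobNorm W * frobNorm Y) := by rw [hs]
    rcases eq_or_lt_of_le hWn with h0 | h0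
    · rw [← h0]; positivity
    · have e : (1 + δ) * (frobNorm W * frobNorm Y) = frobNorm W * ((1 + δ) * frobNorm Y) := by
        ring
      rw [e, pow_two] at h2
      exact le_of_mul_le_mul_left h2 h0
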